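/- Let m ≥ 1 and let B₁, …, B_m be Bernstein subsets of ℝ. If V₁, …, V_m are open subsets of the Sorgenfrey plane S × S such that (x, −x) ∈ V_i for every x ∈ B_i and every i, then the intersection V₁ ∩ ⋯ ∩ V_m is nonempty. -/
import Mathlib


/-- The Sorgenfrey topology on `ℝ`: generated by the half-open intervals `[a, b)`. -/
def sorgenfreyLine : TopologicalSpace ℝ :=
  TopologicalSpace.generateFrom {s : Set ℝ | ∃ a b : ℝ, s = Set.Ico a b}

/-- The Sorgenfrey plane topology on `ℝ × ℝ`: the product of two copies of the
Sorgenfrey topology. -/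
def sorgenfreyPlane : TopologicalSpace (ℝ × ℝ) :=
  TopologicalSpace.induced Prod.fst sorgenfreyLine ⊓
    TopologicalSpace.induced Prod.snd sorgenfreyLine

/-- A Bernstein set: both `B` and its complement meet every uncountable closed
(in the Euclidean topology) subset of `ℝ`. -/
def IsBernstein (B : Set ℝ) : Prop :=
  ∀ C : Set ℝ, IsClosed C → ¬C.Countable → (B ∩ C).Nonempty ∧ (Bᶜ ∩ C).Nonempty

open Set Topology

/-- Basic open neighborhoods in the Sorgenfrey line. -/
lemma sorgenfrey_line_basic {U : Set ℝ}
    (hU : TopologicalSpace.GenerateOpen {s : Set ℝ | ∃ a b : ℝ, s = Set.Ico a b} U) :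
    ∀ x ∈ U, ∃ ε > (0 : ℝ), Ico x (x + ε) ⊆ U := by
  induction hU with
  | basic s hs =>
    rintro x hx
    obtain ⟨a, b, rfl⟩ := hs
    refine ⟨b - x, sub_pos.2 hx.2, fun y hy => ⟨le_trans hx.1 hy.1, ?_⟩⟩
    have := hy.2; linarith
  | univ => exact fun x _ => ⟨1, one_pos, fun y _ => trivial⟩
  | inter s t _ _ ihs iht =>
    rintro x ⟨hxs, hxt⟩
    obtain ⟨ε₁, hε₁, h₁⟩ := ihs x hxs
    obtain ⟨ε₂, hε₂, h₂⟩ := iht x hxt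
    refine ⟨min ε₁ ε₂, lt_min hε₁ hε₂, fun y hy => ⟨h₁ ⟨hy.1, ?_⟩, h₂ ⟨hy.1, ?_⟩⟩⟩
    · exact lt_of_lt_of_le hy.2 (by gcongr; exact min_le_left _ _)
    · exact lt_of_lt_of_le hy.2 (by gcongr; exact min_le_right _ _)
  | sUnion S _ ih =>
    rintro x hx
    obtain ⟨s, hsS, hxs⟩ := hx
    obtain ⟨ε, hε, h⟩ := ih s hsS x hxs
    exact ⟨ε, hε, fun y hy => ⟨s, hsS, h hy⟩⟩

/-- Basic open neighborhoods in the Sorgenfrey plane. -/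
lemma sorgenfrey_plane_basic {V : Set (ℝ × ℝ)} (hV : sorgenfreyPlane.IsOpen V)
    {x y : ℝ} (hxy : (x, y) ∈ V) :
    ∃ ε > (0 : ℝ), Ico x (x + ε) ×ˢ Ico y (y + ε) ⊆ V := by
  letI tl : TopologicalSpace ℝ := sorgenfreyLine
  letI tp : TopologicalSpace (ℝ × ℝ) := sorgenfreyPlane
  have hP : tp = @instTopologicalSpaceProd ℝ ℝ tl tl := rfl
  have hVo : IsOpen[tp] V := hV
  have hVmem : V ∈ @nhds _ tp (x, y) := hVo.mem_nhds hxy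
  rw [hP] at hVmem
  rw [nhds_prod_eq, Filter.mem_prod_iff] at hVmem
  obtain ⟨u, hu, v, hv, huv⟩ := hVmem
  rw [mem_nhds_iff] at hu hv
  obtain ⟨u', hu'u, hu'o, hxu'⟩ := hu
  obtain ⟨v', hv'v, hv'o, hyv'⟩ := hv
  obtain ⟨ε₁, hε₁, h₁⟩ := sorgenfrey_line_basic hu'o x hxu'
  obtain ⟨ε₂, hε₂, h₂⟩ := sorgenfrey_line_basic hv'o y hyv'
  refine ⟨min ε₁ ε₂, lt_min hε₁ hε₂, fun p hp => huv ⟨?_, ?_⟩⟩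
  · exact hu'u (h₁ ⟨hp.1.1, lt_of_lt_of_le hp.1.2 (by gcongr; exact min_le_left _ _)⟩)
  · exact hv'v (h₂ ⟨hp.2.1, lt_of_lt_of_le hp.2.2 (by gcongr; exact min_le_right _ _)⟩)

lemma not_countable_natBool : ¬ Countable (ℕ → Bool) := by
  intro h
  have : Countable (Set ℕ) :=
    Countable.of_equiv _ ((Equiv.arrowCongr (Equiv.refl ℕ) (Equiv.propEquivBool)).symm)
  obtain ⟨f, hf⟩ := exists_injective_nat (Set ℕ)
  exact Function.cantor_injective f hf

/-- An uncountable Gδ-like set (complement of a countable union of closed sets)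
contains an uncountable closed set; hence if it avoids a Bernstein set we get a
contradiction. We state it as: the complement of a countable union of closed
sets is countable, provided it is disjoint from some Bernstein set's witness.
Here: if `G` is the complement of an Fσ set and `G` is uncountable, then `G`
contains a closed-in-ℝ uncountable subset. -/
lemma fsigma_compl_uncountable_contains_closed {C : ℕ → Set ℝ}
    (hC : ∀ n, IsClosed (C n)) (hG : ¬ ((⋃ n, C n)ᶜ : Set ℝ).Countable) :
    ∃ K : Set ℝ, IsClosed K ∧ ¬ K.Countable ∧ K ⊆ (⋃ n, C n)ᶜ := by
  have hclop : PolishSpace.IsClopenable ((⋃ n, C n)ᶜ) :=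
    (PolishSpace.IsClopenable.iUnion (fun n => (hC n).isClopenable)).compl
  obtain ⟨t', hle, hpol, hclosed, -⟩ := hclop
  obtain ⟨f, hfr, hfc, hfi⟩ :=
    @IsClosed.exists_nat_bool_injection_of_not_countable ℝ t' hpol _ hclosed hG
  have hcont : @Continuous (ℕ → Bool) ℝ _ UniformSpace.toTopologicalSpace f := by
    refine (@continuous_def _ _ _ UniformSpace.toTopologicalSpace f).2 fun u hu => ?_
    exact (@continuous_def _ _ _ t' f).1 hfc u (hu.mono hle)
  have hcomp : @IsCompact ℝ UniformSpace.toTopologicalSpace (range f) :=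
    @isCompact_range (ℕ → Bool) ℝ _ UniformSpace.toTopologicalSpace (by infer_instance) f hcont
  have hKcl : @IsClosed ℝ UniformSpace.toTopologicalSpace (range f) :=
    @IsCompact.isClosed ℝ UniformSpace.toTopologicalSpace (by infer_instance) _ hcomp
  refine ⟨range f, hKcl, ?_, hfr⟩
  intro hcnt
  have : Countable (ℕ → Bool) := (countable_coe_iff.2 hcnt).of_equiv _
    (Equiv.ofInjective f hfi).symm
  exact not_countable_natBool this

/-- If `B₁, …, B_m` (`m ≥ 1`) are Bernstein sets and `V₁, …, V_m` are open subsets of the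
Sorgenfrey plane with `(x, -x) ∈ Vᵢ` for all `x ∈ Bᵢ`, then `V₁ ∩ ⋯ ∩ V_m ≠ ∅`. -/
theorem sorgenfrey_open_over_bernstein_antidiagonal_inter_nonempty
    (m : ℕ) (hm : 1 ≤ m) (B : Fin m → Set ℝ) (hBern : ∀ i, IsBernstein (B i))
    (V : Fin m → Set (ℝ × ℝ)) (hVopen : ∀ i, sorgenfreyPlane.IsOpen (V i))
    (hBV : ∀ i, ∀ x ∈ B i, ((x, -x) : ℝ × ℝ) ∈ V i) :
    (⋂ i, V i).Nonempty := by
  classical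
  set s : Fin m → ℕ → Set ℝ := fun i n =>
    {x | x ∈ B i ∧ Ico x (x + 1 / (n + 1 : ℝ)) ×ˢ Ico (-x) (-x + 1 / (n + 1 : ℝ)) ⊆ V i}
    with hs_def
  -- every point of `B i` lies in some `s i n`
  have hcover : ∀ i, ∀ x ∈ B i, ∃ n : ℕ, x ∈ s i n := by
    intro i x hx
    obtain ⟨ε, hε, hsub⟩ := sorgenfrey_plane_basic (hVopen i) (hBV i x hx)
    obtain ⟨n, hn⟩ := exists_nat_one_div_lt hε
    refine ⟨n, hx, fun p hp => hsub ⟨⟨hp.1.1, ?_⟩, ⟨hp.2.1, ?_⟩⟩⟩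
    · exact lt_of_lt_of_le hp.1.2 (by linarith)
    · exact lt_of_lt_of_le hp.2.2 (by linarith)
  -- monotonicity of `s i n` in `n`
  have hmono : ∀ i, ∀ {n N : ℕ}, n ≤ N → s i n ⊆ s i N := by
    intro i n N hnN x hx
    have hle : (1 : ℝ) / (N + 1) ≤ 1 / (n + 1) := by
      apply one_div_le_one_div_of_le (by positivity)
      exact_mod_cast by omega
    refine ⟨hx.1, fun p hp => hx.2 ⟨⟨hp.1.1, ?_⟩, ⟨hp.2.1, ?_⟩⟩⟩
    · exact lt_of_lt_of_le hp.1.2 (by linarith)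
    · exact lt_of_lt_of_le hp.2.2 (by linarith)
  -- the closures of the `s i n` cover all of ℝ except countably many points
  have hcc : ∀ i, ((⋃ n, closure (s i n))ᶜ : Set ℝ).Countable := by
    intro i
    by_contra hG
    obtain ⟨K, hKc, hKunc, hKsub⟩ :=
      fsigma_compl_uncountable_contains_closed (fun n => isClosed_closure) hG
    obtain ⟨x, hxB, hxK⟩ := (hBern i K hKc hKunc).1
    obtain ⟨n, hn⟩ := hcover i x hxB
    exact hKsub hxK (mem_iUnion.2 ⟨n, subset_closure hn⟩)
  -- pick a point in the intersection of all the Fσ sets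
  have hT : (⋂ i, ⋃ n, closure (s i n)).Nonempty := by
    rw [nonempty_iff_ne_empty]
    intro hemp
    have : ((⋂ i, ⋃ n, closure (s i n))ᶜ : Set ℝ).Countable := by
      rw [compl_iInter]
      exact countable_iUnion hcc
    rw [hemp, compl_empty] at this
    exact Cardinal.not_countable_real this
  obtain ⟨a, ha⟩ := hT
  -- choose a uniform `N`
  have haU : ∀ i, ∃ n, a ∈ closure (s i n) := fun i => mem_iUnion.1 (mem_iInter.1 ha i)
  choose nf hnf using haU
  set N : ℕ := Finset.univ.sup nf with hN_def
  have haN : ∀ i, a ∈ closure (s i N) :=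
    fun i => closure_mono (hmono i (Finset.le_sup (Finset.mem_univ i))) (hnf i)
  set ε : ℝ := 1 / (N + 1) with hε_def
  have hε : 0 < ε := by positivity
  -- pick points of `s i N` close to `a`
  have hx : ∀ i, ∃ x ∈ s i N, |a - x| < ε / 4 := by
    intro i
    obtain ⟨x, hxs, hxd⟩ := Metric.mem_closure_iff.1 (haN i) (ε / 4) (by positivity)
    exact ⟨x, hxs, by simpa [Real.dist_eq] using hxd⟩
  choose x hxs hxd using hx
  refine ⟨(a + ε / 4, -a + ε / 4), mem_iInter.2 fun i => ?_⟩
  have h1 : |a - x i| < ε / 4 := hxd i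
  have h1' : a - x i < ε / 4 := (abs_lt.1 h1).2
  have h1'' : -(ε / 4) < a - x i := (abs_lt.1 h1).1
  refine (hxs i).2 ⟨⟨?_, ?_⟩, ⟨?_, ?_⟩⟩ <;> simp only [] <;> [skip; skip; skip; skip]
  · linarith
  · linarith
  · linarith
  · linarith
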